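/- Let X, Y be independent Gaussian vectors in R^k with diagonal covariances, LS = max_{‖w‖=1} P((X−Y)·w > 0), attained at w*. Fix a coordinate j and let X', Y' be independent Gaussian vectors identical in distribution to X, Y in every coordinate except j, where |μ_j(X') − μ_j(Y')| > |μ_j(X) − μ_j(Y)| and σ²_j(X') + σ²_j(Y') = σ²_j(X) + σ²_j(Y). If w*_j ≠ 0, then LS' = max_{‖w‖=1} P((X'−Y')·w > 0) > LS. -/

import Mathlib

open ProbabilityTheory MeasureTheory

/-- For independent Gaussian vectors `X, Y` in `ℝ^k` with diagonal covariances,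
mean difference `u = μ(X) - μ(Y)` and per-axis variance sums `d j = σ²_j(X) + σ²_j(Y)`,
the projection `(X - Y) ⬝ w` is Gaussian with mean `u ⬝ w` and variance
`Σ_j d j * w j ^ 2`; so `P((X - Y) ⬝ w > 0)` is the mass the corresponding Gaussian
assigns to `(0, ∞)`. -/
noncomputable def sepProb (k : ℕ) (u : Fin k → ℝ) (d : Fin k → NNReal)
    (w : Fin k → ℝ) : ℝ :=
  (gaussianReal (∑ j, u j * w j) (∑ j, d j * ‖w j‖₊ ^ 2) (Set.Ioi 0)).toReal

/-- The set of unit vectors of `ℝ^k`. -/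
def unitVecs (k : ℕ) : Set (Fin k → ℝ) := {w | ∑ j, w j ^ 2 = 1}

open MeasureTheory in
lemma gaussianReal_Ioi_strictMono {v : NNReal} (hv : v ≠ 0) {m m' : ℝ} (hm : m < m') :
    (gaussianReal m v (Set.Ioi 0)).toReal < (gaussianReal m' v (Set.Ioi 0)).toReal := by
  have hmap : ∀ c : ℝ, gaussianReal c v (Set.Ioi 0) = gaussianReal 0 v (Set.Ioi (-c)) := by
    intro c
    have h := gaussianReal_map_add_const (μ := 0) (v := v) c
    rw [zero_add] at h
    rw [← h, Measure.map_apply (by fun_prop) measurableSet_Ioi]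
    congr 1
    ext x
    simp [neg_lt_iff_pos_add, add_comm]
  rw [hmap m, hmap m']
  have hsub : Set.Ioi (-m') = Set.Ioc (-m') (-m) ∪ Set.Ioi (-m) := by
    rw [Set.Ioc_union_Ioi_eq_Ioi (by linarith)]
  have hdisj : Disjoint (Set.Ioc (-m') (-m)) (Set.Ioi (-m)) := by
    simp only [Set.disjoint_left, Set.mem_Ioc, Set.mem_Ioi]
    intro a ha
    exact not_lt.mpr ha.2
  have : IsProbabilityMeasure (gaussianReal 0 v) := inferInstance
  have hfin : ∀ s : Set ℝ, gaussianReal 0 v s ≠ ⊤ := fun s => measure_ne_top _ s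
  have hpos : gaussianReal 0 v (Set.Ioc (-m') (-m)) ≠ 0 := by
    intro h0
    have := (gaussianReal_absolutelyContinuous' 0 hv) h0
    rw [Real.volume_Ioc] at this
    simp only [ENNReal.ofReal_eq_zero, sub_nonpos] at this
    linarith
  have hmeas : gaussianReal 0 v (Set.Ioi (-m')) =
      gaussianReal 0 v (Set.Ioi (-m)) + gaussianReal 0 v (Set.Ioc (-m') (-m)) := by
    rw [hsub, measure_union hdisj measurableSet_Ioi, add_comm]
  have h1 : gaussianReal 0 v (Set.Ioi (-m)) < gaussianReal 0 v (Set.Ioi (-m')) := by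
    rw [hmeas]
    exact ENNReal.lt_add_right (hfin _) hpos
  exact (ENNReal.toReal_lt_toReal (hfin _) (hfin _)).mpr h1

theorem mean_gap_increases_separability (k : ℕ) (u : Fin k → ℝ) (d : Fin k → NNReal)
    (hd : ∀ i, 0 < d i)
    (wstar : Fin k → ℝ) (hws : wstar ∈ unitVecs k)
    (hmax : ∀ w ∈ unitVecs k, sepProb k u d w ≤ sepProb k u d wstar)
    (j : Fin k) (hwj : wstar j ≠ 0)
    (u' : Fin k → ℝ) (hu' : ∀ i, i ≠ j → u' i = u i) (hgap : |u j| < |u' j|) :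
    sepProb k u d wstar < sSup ((fun w => sepProb k u' d w) '' unitVecs k) := by
  classical
  set w' : Fin k → ℝ := fun i => if i = j then (if 0 ≤ u' j * wstar j then wstar j else -wstar j)
    else wstar i with hw'
  have habs : |w' j| = |wstar j| := by
    simp only [hw', if_pos rfl]
    split <;> simp [abs_neg]
  have hsq : ∀ i, w' i ^ 2 = wstar i ^ 2 := by
    intro i
    by_cases hi : i = j
    · subst hi; rw [← sq_abs, habs, sq_abs]
    · simp [hw', hi]
  have hw'unit : w' ∈ unitVecs k := by
    have : ∑ i, w' i ^ 2 = ∑ i, wstar i ^ 2 := Finset.sum_congr rfl (fun i _ => hsq i)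
    simpa [unitVecs, this] using hws
  -- variances agree
  have hvar : (∑ i, d i * ‖w' i‖₊ ^ 2) = ∑ i, d i * ‖wstar i‖₊ ^ 2 := by
    refine Finset.sum_congr rfl (fun i _ => ?_)
    congr 1
    by_cases hi : i = j
    · subst hi
      ext
      push_cast
      simp only [coe_nnnorm, Real.norm_eq_abs]
      rw [habs]
    · simp [hw', hi]
  -- variance nonzero
  have hvne : (∑ i, d i * ‖wstar i‖₊ ^ 2) ≠ 0 := by
    intro h0
    have := Finset.sum_eq_zero_iff.mp h0 j (Finset.mem_univ j)
    rcases mul_eq_zero.mp this with h | h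
    · exact absurd h (hd j).ne'
    · rw [pow_eq_zero_iff (by norm_num)] at h
      exact hwj (by simpa using h)
  -- means
  have hmean : (∑ i, u i * wstar i) < ∑ i, u' i * w' i := by
    have hj' : u' j * w' j = |u' j| * |wstar j| := by
      simp only [hw', if_pos rfl]
      split_ifs with h
      · rw [← abs_mul, abs_of_nonneg h]
      · rw [mul_neg, ← abs_mul, abs_of_nonpos (le_of_not_ge h)]
    have key : u j * wstar j < u' j * w' j := by
      rw [hj']
      calc u j * wstar j ≤ |u j * wstar j| := le_abs_self _
        _ = |u j| * |wstar j| := abs_mul _ _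
        _ < |u' j| * |wstar j| := by
            exact mul_lt_mul_of_pos_right hgap (abs_pos.mpr hwj)
    have hoff : ∀ i ∈ Finset.univ.erase j, u' i * w' i = u i * wstar i := by
      intro i hi
      have hi' := Finset.ne_of_mem_erase hi
      simp [hw', hi', hu' i hi']
    rw [← Finset.add_sum_erase _ (fun i => u' i * w' i) (Finset.mem_univ j),
        ← Finset.add_sum_erase _ (fun i => u i * wstar i) (Finset.mem_univ j),
        Finset.sum_congr rfl hoff]
    exact add_lt_add_left key _
  -- strict inequality sepProb u wstar < sepProb u' w'
  have hlt : sepProb k u d wstar < sepProb k u' d w' := by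
    unfold sepProb
    rw [hvar]
    exact gaussianReal_Ioi_strictMono hvne hmean
  refine hlt.trans_le (le_csSup ?_ ⟨w', hw'unit, rfl⟩)
  refine ⟨1, ?_⟩
  rintro x ⟨w, _, rfl⟩
  have : IsProbabilityMeasure (gaussianReal (∑ i, u' i * w i) (∑ i, d i * ‖w i‖₊ ^ 2)) :=
    inferInstance
  simp only [sepProb]
  exact ENNReal.toReal_le_of_le_ofReal zero_le_one (by simpa using prob_le_one)
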